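/- arXiv:2310.02942 — 2 statements merged into one kernel-verified Lean document; each statement's English description precedes it below -/
import Mathlib

section
/- Let d ≥ 1, let P, M be symmetric positive-definite real d×d matrices such that P − M is positive definite, and let Ã be a real d×d matrix such that ÃᵀPÃ − P + M is negative semidefinite. Let f̃ : ℝᵈ → ℝᵈ satisfy f̃(x)ᵀ P f̃(x) ≤ xᵀ Ãᵀ P Ã x for all x ∈ ℝᵈ. Let (Ω, ℱ, ℙ) be a probability space and w : Ω → ℝᵈ a random vector whose components are square-integrable with E[w_i] = 0 for each i, and let S be the second-moment matrix S_{ij} = E[w_i w_j]. Set t₀ = tr(P S), λ' = eig_max(P^{-1/2}(P − M)P^{-1/2}), μ = (1 + λ')/2, and V(x) = 1 + (1/2) xᵀPx. Then μ < 1, and for every x ∈ ℝᵈ with xᵀPx ≥ t₀/(1 − μ) + 2 one has E[V(f̃(x) + w)] ≤ μ V(x). -/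
open Matrix MeasureTheory

section Helpers

lemma dot_conj {d : ℕ} (A C : Matrix (Fin d) (Fin d) ℝ) (x : Fin d → ℝ) :
    x ⬝ᵥ ((Cᵀ * A * C) *ᵥ x) = (C *ᵥ x) ⬝ᵥ (A *ᵥ (C *ᵥ x)) := by
  rw [← mulVec_mulVec, ← mulVec_mulVec, dotProduct_mulVec x Cᵀ, vecMul_transpose]

lemma posdef_conj {d : ℕ} {A C : Matrix (Fin d) (Fin d) ℝ} (hA : A.PosDef)
    (hC : IsUnit C.det) : (Cᵀ * A * C).PosDef := by
  refine PosDef.of_dotProduct_mulVec_pos ?_ ?_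
  · have h := isHermitian_conjTranspose_mul_mul C hA.1
    simpa [conjTranspose_eq_transpose_of_trivial] using h
  · intro x hx
    have hCx : C *ᵥ x ≠ 0 := by
      intro h
      apply hx
      have h2 := congrArg (fun v => C⁻¹ *ᵥ v) h
      simpa [mulVec_mulVec, nonsing_inv_mul _ hC] using h2
    have h := hA.dotProduct_mulVec_pos hCx
    simpa [star_trivial, dot_conj] using h

end Helpers

/-- The largest eigenvalue of a (symmetric) real matrix, viewed as the supremum of
the set of eigenvalues of the associated linear endomorphism. -/
noncomputable def eigMax {d : ℕ} (Q : Matrix (Fin d) (Fin d) ℝ) : ℝ :=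
  sSup {μ : ℝ | Module.End.HasEigenvalue (Matrix.toLin' Q) μ}

/-- The square root of a positive semidefinite matrix, as defined in Mathlib (Dec 2024)
(since removed from Mathlib). -/
noncomputable def Matrix.PosSemidef.sqrt {n : Type*} [Fintype n] [DecidableEq n]
    {A : Matrix n n ℝ} (hA : A.PosSemidef) : Matrix n n ℝ :=
  hA.1.eigenvectorUnitary.1 * diagonal ((↑) ∘ Real.sqrt ∘ hA.1.eigenvalues) *
    (star hA.1.eigenvectorUnitary : Matrix n n ℝ)

section EigHelpers

lemma eig_set_eq {d : ℕ} {Q : Matrix (Fin d) (Fin d) ℝ} (hQ : Q.IsHermitian) :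
    {μ : ℝ | Module.End.HasEigenvalue (Matrix.toLin' Q) μ} = Set.range hQ.eigenvalues := by
  ext μ
  rw [Set.mem_setOf_eq, Module.End.hasEigenvalue_iff_mem_spectrum,
    show Matrix.toLin' Q = Matrix.toLinAlgEquiv' Q from rfl, AlgEquiv.spectrum_eq,
    hQ.spectrum_real_eq_range_eigenvalues]

lemma eigMax_spec {d : ℕ} (hd : 1 ≤ d) {Q : Matrix (Fin d) (Fin d) ℝ} (hQ : Q.IsHermitian) :
    (∃ i, eigMax Q = hQ.eigenvalues i) ∧ (∀ i, hQ.eigenvalues i ≤ eigMax Q) := by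
  have hfin : (Set.range hQ.eigenvalues).Finite := Set.finite_range _
  have hne : (Set.range hQ.eigenvalues).Nonempty := ⟨hQ.eigenvalues ⟨0, hd⟩, Set.mem_range_self _⟩
  have hmem : eigMax Q ∈ Set.range hQ.eigenvalues := by
    rw [eigMax, eig_set_eq hQ]
    exact hne.csSup_mem hfin
  refine ⟨?_, fun i => ?_⟩
  · obtain ⟨i, hi⟩ := hmem; exact ⟨i, hi.symm⟩
  · rw [eigMax, eig_set_eq hQ]
    exact le_csSup hfin.bddAbove (Set.mem_range_self i)

lemma form_le {d : ℕ} {Q : Matrix (Fin d) (Fin d) ℝ} (hQ : Q.IsHermitian) {lam : ℝ}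
    (hle : ∀ i, hQ.eigenvalues i ≤ lam) (y : Fin d → ℝ) :
    y ⬝ᵥ (Q *ᵥ y) ≤ lam * (y ⬝ᵥ y) := by
  set U : Matrix (Fin d) (Fin d) ℝ := (hQ.eigenvectorUnitary : Matrix (Fin d) (Fin d) ℝ) with hU
  have hUU : U * Uᵀ = 1 := by
    have := (Matrix.mem_unitaryGroup_iff).mp hQ.eigenvectorUnitary.2
    simpa [star_eq_conjTranspose, conjTranspose_eq_transpose_of_trivial] using this
  have hspec : Q = Uᵀᵀ * diagonal hQ.eigenvalues * Uᵀ := by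
    have := hQ.spectral_theorem
    simpa [star_eq_conjTranspose, conjTranspose_eq_transpose_of_trivial,
      Function.comp] using this
  set z := Uᵀ *ᵥ y with hz
  have h1 : y ⬝ᵥ (Q *ᵥ y) = z ⬝ᵥ (diagonal hQ.eigenvalues *ᵥ z) := by
    conv_lhs => rw [hspec]
    rw [dot_conj]
  have h2 : y ⬝ᵥ y = z ⬝ᵥ z := by
    have : y ⬝ᵥ ((Uᵀᵀ * 1 * Uᵀ) *ᵥ y) = z ⬝ᵥ ((1 : Matrix (Fin d) (Fin d) ℝ) *ᵥ z) :=
      dot_conj _ _ _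
    simpa [Matrix.mul_one, transpose_transpose, hUU] using this
  rw [h1, h2]
  simp only [dotProduct, mulVec_diagonal, Finset.mul_sum]
  apply Finset.sum_le_sum
  intro i _
  have := mul_le_mul_of_nonneg_right (hle i) (mul_self_nonneg (z i))
  nlinarith [this]

end EigHelpers

section IntHelpers

variable {Ω : Type*} [MeasurableSpace Ω] {ℙ : Measure Ω} [IsProbabilityMeasure ℙ]

omit [IsProbabilityMeasure ℙ] in
lemma integrable_mul2 {f g : Ω → ℝ} (hf : MemLp f 2 ℙ) (hg : MemLp g 2 ℙ) :
    Integrable (fun ω => f ω * g ω) ℙ := by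
  have h := hg.smul (φ := f) hf (p := 2) (q := 2) (r := 1)
  have := memLp_one_iff_integrable.mp h
  exact this

lemma integrable_shift_prod {f g : Ω → ℝ} (hf : MemLp f 2 ℙ) (hg : MemLp g 2 ℙ) (c₁ c₂ : ℝ) :
    Integrable (fun ω => (c₁ + f ω) * (c₂ + g ω)) ℙ :=
  integrable_mul2 ((memLp_const c₁).add hf) ((memLp_const c₂).add hg)

lemma integral_shift_prod {f g : Ω → ℝ} (hf : MemLp f 2 ℙ) (hg : MemLp g 2 ℙ)
    (hf0 : ∫ ω, f ω ∂ℙ = 0) (hg0 : ∫ ω, g ω ∂ℙ = 0) (c₁ c₂ : ℝ) :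
    ∫ ω, (c₁ + f ω) * (c₂ + g ω) ∂ℙ = c₁ * c₂ + ∫ ω, f ω * g ω ∂ℙ := by
  have hfi : Integrable f ℙ := hf.integrable one_le_two
  have hgi : Integrable g ℙ := hg.integrable one_le_two
  have hfg : Integrable (fun ω => f ω * g ω) ℙ := integrable_mul2 hf hg
  have heq : (fun ω => (c₁ + f ω) * (c₂ + g ω)) =
      fun ω => c₁ * c₂ + (c₁ * g ω + (c₂ * f ω + f ω * g ω)) := by
    funext ω; ring
  have I3 : Integrable (fun ω => c₂ * f ω + f ω * g ω) ℙ := (hfi.const_mul c₂).add hfg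
  have I2 : Integrable (fun ω => c₁ * g ω + (c₂ * f ω + f ω * g ω)) ℙ := (hgi.const_mul c₁).add I3
  rw [heq]
  rw [integral_add (integrable_const _) I2]
  rw [integral_add (hgi.const_mul c₁) I3]
  rw [integral_add (hfi.const_mul c₂) hfg]
  simp [integral_const_mul, hf0, hg0]

end IntHelpers

/-- Drift condition outside a sublevel set: with `V(x) = 1 + xᵀPx/2`,
`μ = (1 + eig_max(P^{-1/2}(P-M)P^{-1/2}))/2 < 1` and, for every `x` with
`xᵀPx ≥ tr(PS)/(1-μ) + 2`, `E[V(f̃(x) + w)] ≤ μ V(x)`. -/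
theorem drift_condition_outside_sublevel (d : ℕ) (hd : 1 ≤ d)
    (P M : Matrix (Fin d) (Fin d) ℝ) (hP : P.PosDef) (hM : M.PosDef)
    (hPM : (P - M).PosDef)
    (At : Matrix (Fin d) (Fin d) ℝ)
    (hneg : ∀ x : Fin d → ℝ, x ⬝ᵥ ((Atᵀ * P * At - P + M) *ᵥ x) ≤ 0)
    (ft : (Fin d → ℝ) → (Fin d → ℝ))
    (hft : ∀ x : Fin d → ℝ, (ft x) ⬝ᵥ (P *ᵥ (ft x)) ≤ x ⬝ᵥ ((Atᵀ * P * At) *ᵥ x))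
    {Ω : Type*} [MeasurableSpace Ω] (ℙ : Measure Ω) [IsProbabilityMeasure ℙ]
    (w : Ω → Fin d → ℝ)
    (hw2 : ∀ i, MemLp (fun ω => w ω i) 2 ℙ)
    (hw0 : ∀ i, ∫ ω, w ω i ∂ℙ = 0)
    (S : Matrix (Fin d) (Fin d) ℝ)
    (hS : S = Matrix.of fun i j => ∫ ω, w ω i * w ω j ∂ℙ)
    (t₀ : ℝ) (ht₀ : t₀ = (P * S).trace)
    (lam' : ℝ) (hlam' : lam' = eigMax ((hP.posSemidef.sqrt)⁻¹ * (P - M) * (hP.posSemidef.sqrt)⁻¹))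
    (μ : ℝ) (hμ : μ = (1 + lam') / 2)
    (V : (Fin d → ℝ) → ℝ) (hV : ∀ x, V x = 1 + (1 / 2) * (x ⬝ᵥ (P *ᵥ x))) :
    μ < 1 ∧
      ∀ x : Fin d → ℝ, t₀ / (1 - μ) + 2 ≤ x ⬝ᵥ (P *ᵥ x) →
        ∫ ω, V (ft x + w ω) ∂ℙ ≤ μ * V x := by
  classical
  set R := hP.posSemidef.sqrt with hR
  have hRH : R.IsHermitian := by
    rw [hR, Matrix.PosSemidef.sqrt, IsHermitian, conjTranspose_mul, conjTranspose_mul,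
      star_eq_conjTranspose, conjTranspose_conjTranspose, diagonal_conjTranspose, Matrix.mul_assoc]
    simp
  have hRT : Rᵀ = R := by
    have h := hRH
    rwa [Matrix.IsHermitian, conjTranspose_eq_transpose_of_trivial] at h
  have hRR : R * R = P := by
    have hU : (star hP.posSemidef.1.eigenvectorUnitary : Matrix (Fin d) (Fin d) ℝ) *
        (hP.posSemidef.1.eigenvectorUnitary : Matrix (Fin d) (Fin d) ℝ) = 1 :=
      Unitary.coe_star_mul_self _
    rw [hR, Matrix.PosSemidef.sqrt]
    conv_rhs => rw [hP.posSemidef.1.spectral_theorem, Unitary.conjStarAlgAut_apply]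
    simp only [Matrix.mul_assoc]
    rw [← Matrix.mul_assoc _ _ (diagonal _ * _), hU, Matrix.one_mul, ← Matrix.mul_assoc (diagonal _),
      diagonal_mul_diagonal]
    congr 3
    funext i
    simp [Real.mul_self_sqrt (hP.posSemidef.eigenvalues_nonneg i)]
  have hRdet : IsUnit R.det := by
    have hPdet := hP.det_pos
    rw [← hRR, det_mul] at hPdet
    exact isUnit_iff_ne_zero.mpr (fun h => by rw [h] at hPdet; simp at hPdet)
  have hRidet : IsUnit (R⁻¹).det := isUnit_nonsing_inv_det R hRdet
  have hRiR : R⁻¹ * R = 1 := nonsing_inv_mul R hRdet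
  have hRRi : R * R⁻¹ = 1 := mul_nonsing_inv R hRdet
  have hRiT : (R⁻¹)ᵀ = R⁻¹ := by rw [transpose_nonsing_inv, hRT]
  set Q := R⁻¹ * (P - M) * R⁻¹ with hQdef
  have hQ1 : Q = (R⁻¹)ᵀ * (P - M) * R⁻¹ := by rw [hRiT]
  have hQpd : Q.PosDef := hQ1 ▸ posdef_conj hPM hRidet
  have hQH : Q.IsHermitian := hQpd.isHermitian
  have hlamQ : lam' = eigMax Q := hlam'
  obtain ⟨⟨i₀, hi₀⟩, hub⟩ := eigMax_spec hd hQH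
  -- 1 - Q is positive definite
  have hPRi : R⁻¹ * P * R⁻¹ = 1 := by
    rw [← hRR, ← Matrix.mul_assoc, hRiR, Matrix.one_mul, hRRi]
  have h1Q : ((1 : Matrix (Fin d) (Fin d) ℝ) - Q).PosDef := by
    have key : (1 : Matrix (Fin d) (Fin d) ℝ) - Q = (R⁻¹)ᵀ * M * R⁻¹ := by
      rw [hRiT, hQdef, Matrix.mul_sub, Matrix.sub_mul, hPRi]
      abel
    rw [key]
    exact posdef_conj hM hRidet
  -- each eigenvalue of Q is < 1
  have hev1 : ∀ i, hQH.eigenvalues i < 1 := by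
    intro i
    set b : Fin d → ℝ := ⇑(hQH.eigenvectorBasis i) with hb
    have hbne : b ≠ 0 := by
      intro hc
      exact hQH.eigenvectorBasis.orthonormal.ne_zero i (by ext j; simpa using congrFun hc j)
    have hQb : Q *ᵥ b = hQH.eigenvalues i • b := hQH.mulVec_eigenvectorBasis i
    have hpos := h1Q.dotProduct_mulVec_pos hbne
    have hbb : 0 < b ⬝ᵥ b := by
      rcases lt_or_eq_of_le (Finset.sum_nonneg fun j _ => mul_self_nonneg (b j)) with h | h
      · exact h
      · exact absurd ((dotProduct_self_eq_zero).mp h.symm) hbne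
    have hcomp : b ⬝ᵥ (((1 : Matrix (Fin d) (Fin d) ℝ) - Q) *ᵥ b)
        = b ⬝ᵥ b - hQH.eigenvalues i * (b ⬝ᵥ b) := by
      rw [Matrix.sub_mulVec, dotProduct_sub, one_mulVec, hQb, dotProduct_smul, smul_eq_mul]
    rw [star_trivial] at hpos
    rw [hcomp] at hpos
    nlinarith
  have hlam1 : lam' < 1 := by rw [hlamQ, hi₀]; exact hev1 i₀
  have hμ1 : μ < 1 := by rw [hμ]; linarith
  refine ⟨hμ1, fun x hx => ?_⟩
  -- the quadratic form bound
  have hform : ∀ y : Fin d → ℝ, y ⬝ᵥ (Q *ᵥ y) ≤ lam' * (y ⬝ᵥ y) :=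
    form_le hQH (fun i => hlamQ ▸ hub i)
  have hPMform : x ⬝ᵥ ((P - M) *ᵥ x) ≤ lam' * (x ⬝ᵥ (P *ᵥ x)) := by
    have h1 : P - M = Rᵀ * Q * R := by
      rw [hRT, hQdef]
      rw [Matrix.mul_assoc, Matrix.mul_assoc, hRiR, Matrix.mul_one, ← Matrix.mul_assoc, hRRi,
        Matrix.one_mul]
    have h2 : P = Rᵀ * 1 * R := by rw [hRT, Matrix.mul_one, hRR]
    calc x ⬝ᵥ ((P - M) *ᵥ x) = (R *ᵥ x) ⬝ᵥ (Q *ᵥ (R *ᵥ x)) := by rw [h1, dot_conj]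
      _ ≤ lam' * ((R *ᵥ x) ⬝ᵥ (R *ᵥ x)) := hform _
      _ = lam' * (x ⬝ᵥ (P *ᵥ x)) := by
          congr 1
          conv_rhs => rw [h2, dot_conj]
          rw [one_mulVec]
  have hA2 : x ⬝ᵥ ((Atᵀ * P * At) *ᵥ x) ≤ x ⬝ᵥ ((P - M) *ᵥ x) := by
    have h := hneg x
    simp only [Matrix.sub_mulVec, Matrix.add_mulVec, dotProduct_sub, dotProduct_add] at h ⊢
    linarith
  have haPa : (ft x) ⬝ᵥ (P *ᵥ (ft x)) ≤ lam' * (x ⬝ᵥ (P *ᵥ x)) :=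
    le_trans (hft x) (le_trans hA2 hPMform)
  set a : Fin d → ℝ := ft x with ha
  -- pointwise expansion
  have heq : (fun ω => (a + w ω) ⬝ᵥ (P *ᵥ (a + w ω))) =
      fun ω => ∑ i, ∑ j, (a i + w ω i) * (P i j * (a j + w ω j)) := by
    funext ω
    simp [dotProduct, mulVec, Finset.mul_sum]
  have hterm : ∀ i j, Integrable (fun ω => (a i + w ω i) * (P i j * (a j + w ω j))) ℙ := by
    intro i j
    have h := (integrable_shift_prod (hw2 i) (hw2 j) (a i) (a j)).const_mul (P i j)
    have heq2 : (fun ω => (a i + w ω i) * (P i j * (a j + w ω j)))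
        = fun ω => P i j * ((a i + w ω i) * (a j + w ω j)) := by funext ω; ring
    rw [heq2]; exact h
  have hI : Integrable (fun ω => (a + w ω) ⬝ᵥ (P *ᵥ (a + w ω))) ℙ := by
    rw [heq]
    exact integrable_finset_sum _ fun i _ => integrable_finset_sum _ fun j _ => hterm i j
  have hij : ∀ i j, ∫ ω, (a i + w ω i) * (P i j * (a j + w ω j)) ∂ℙ
      = a i * (P i j * a j) + P i j * S i j := by
    intro i j
    have heq2 : (fun ω => (a i + w ω i) * (P i j * (a j + w ω j)))
        = fun ω => P i j * ((a i + w ω i) * (a j + w ω j)) := by funext ω; ring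
    rw [heq2, integral_const_mul,
      integral_shift_prod (hw2 i) (hw2 j) (hw0 i) (hw0 j) (a i) (a j), hS]
    simp only [Matrix.of_apply]
    ring
  have hint : ∫ ω, (a + w ω) ⬝ᵥ (P *ᵥ (a + w ω)) ∂ℙ
      = a ⬝ᵥ (P *ᵥ a) + ∑ i, ∑ j, P i j * S i j := by
    rw [heq, integral_finset_sum _ (fun i _ => integrable_finset_sum _ (fun j _ => hterm i j))]
    rw [Finset.sum_congr rfl (fun i _ => integral_finset_sum _ (fun j _ => hterm i j))]
    rw [Finset.sum_congr rfl (fun i _ => Finset.sum_congr rfl (fun j _ => hij i j))]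
    rw [show a ⬝ᵥ (P *ᵥ a) = ∑ i, ∑ j, a i * (P i j * a j) by
      simp [dotProduct, mulVec, Finset.mul_sum]]
    rw [← Finset.sum_add_distrib]
    exact Finset.sum_congr rfl fun i _ => Finset.sum_add_distrib
  have htr : ∑ i, ∑ j, P i j * S i j = t₀ := by
    rw [ht₀]
    have hSsymm : ∀ i j, S i j = S j i := by
      intro i j; rw [hS]; simp only [Matrix.of_apply]
      exact integral_congr_ae (Filter.Eventually.of_forall fun ω => mul_comm _ _)
    simp only [Matrix.trace, Matrix.diag, Matrix.mul_apply]
    exact Finset.sum_congr rfl fun i _ => Finset.sum_congr rfl fun j _ => by rw [hSsymm i j]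
  -- compute the integral of V
  have hVint : ∫ ω, V (a + w ω) ∂ℙ = 1 + (1 / 2) * (a ⬝ᵥ (P *ᵥ a) + t₀) := by
    have heqV : (fun ω => V (a + w ω)) =
        fun ω => 1 + (1 / 2) * ((a + w ω) ⬝ᵥ (P *ᵥ (a + w ω))) := by
      funext ω; rw [hV]
    rw [heqV, integral_add (integrable_const 1) (hI.const_mul _), integral_const_mul, hint, htr]
    simp
  rw [hVint, hV x]
  -- final arithmetic
  set q := x ⬝ᵥ (P *ᵥ x) with hq
  have h1μ : (0 : ℝ) < 1 - μ := by linarith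
  have ht2 : t₀ + 2 * (1 - μ) ≤ (1 - μ) * q := by
    have h3 := mul_le_mul_of_nonneg_left hx h1μ.le
    rw [mul_add, mul_div_cancel₀ t₀ h1μ.ne'] at h3
    linarith
  have hq' : μ * q = (1 + lam') / 2 * q := by rw [hμ]
  have hμq : (1 - μ) * q = q - μ * q := by ring
  rw [hμq] at ht2
  have hμl : μ = (1 + lam') / 2 := hμ
  nlinarith [haPa, ht2, hq']
end

section
/- Let d ≥ 1, let P, M be symmetric positive-definite real d×d matrices, and let Ã be a real d×d matrix such that ÃᵀPÃ − P + M is negative semidefinite. Let f̃ : ℝᵈ → ℝᵈ satisfy f̃(x)ᵀ P f̃(x) ≤ xᵀ Ãᵀ P Ã x for all x ∈ ℝᵈ. Let (Ω, ℱ, ℙ) be a probability space and w : Ω → ℝᵈ a random vector whose components are square-integrable with E[w_i] = 0 for each i, and let S be the second-moment matrix S_{ij} = E[w_i w_j]. Set t₀ = tr(P S) and V(x) = 1 + (1/2) xᵀPx. Then for every R ≥ 0 and every x ∈ ℝᵈ with xᵀPx ≤ R one has E[V(f̃(x) + w)] ≤ 1 + (R + t₀)/2. -/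
open Matrix MeasureTheory

lemma integrable_mul_of_memL2 {Ω : Type*} [MeasurableSpace Ω] {ℙ : Measure Ω}
    {f g : Ω → ℝ} (hf : MemLp f 2 ℙ) (hg : MemLp g 2 ℙ) :
    Integrable (fun ω => f ω * g ω) ℙ := by
  have h := L2.integrable_inner (𝕜 := ℝ) (hf.toLp f) (hg.toLp g)
  refine h.congr ?_
  filter_upwards [hf.coeFn_toLp, hg.coeFn_toLp] with ω h1 h2
  simp [h1, h2, RCLike.inner_apply, mul_comm]

/-- Bound inside a sublevel set: with `V(x) = 1 + xᵀPx/2` and `t₀ = tr(PS)`,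
for every `R ≥ 0` and every `x` with `xᵀPx ≤ R`, `E[V(f̃(x) + w)] ≤ 1 + (R + t₀)/2`. -/
theorem expected_lyapunov_bound_on_sublevel (d : ℕ) (hd : 1 ≤ d)
    (P M : Matrix (Fin d) (Fin d) ℝ) (hP : P.PosDef) (hM : M.PosDef)
    (At : Matrix (Fin d) (Fin d) ℝ)
    (hneg : ∀ x : Fin d → ℝ, x ⬝ᵥ ((Atᵀ * P * At - P + M) *ᵥ x) ≤ 0)
    (ft : (Fin d → ℝ) → (Fin d → ℝ))
    (hft : ∀ x : Fin d → ℝ, (ft x) ⬝ᵥ (P *ᵥ (ft x)) ≤ x ⬝ᵥ ((Atᵀ * P * At) *ᵥ x))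
    {Ω : Type*} [MeasurableSpace Ω] (ℙ : Measure Ω) [IsProbabilityMeasure ℙ]
    (w : Ω → Fin d → ℝ)
    (hw2 : ∀ i, MemLp (fun ω => w ω i) 2 ℙ)
    (hw0 : ∀ i, ∫ ω, w ω i ∂ℙ = 0)
    (S : Matrix (Fin d) (Fin d) ℝ)
    (hS : S = Matrix.of fun i j => ∫ ω, w ω i * w ω j ∂ℙ)
    (t₀ : ℝ) (ht₀ : t₀ = (P * S).trace)
    (V : (Fin d → ℝ) → ℝ) (hV : ∀ x, V x = 1 + (1 / 2) * (x ⬝ᵥ (P *ᵥ x))) :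
    ∀ R : ℝ, 0 ≤ R → ∀ x : Fin d → ℝ, x ⬝ᵥ (P *ᵥ x) ≤ R →
      ∫ ω, V (ft x + w ω) ∂ℙ ≤ 1 + (R + t₀) / 2 := by
  intro R hR x hxR
  set y := ft x with hy
  -- square-integrability of shifted coordinates
  have hyw2 : ∀ i, MemLp (fun ω => y i + w ω i) 2 ℙ :=
    fun i => (memLp_const (y i)).add (hw2 i)
  -- integrability of each term
  have hterm : ∀ (i j : Fin d),
      Integrable (fun ω => (y i + w ω i) * (P i j * (y j + w ω j))) ℙ := by
    intro i j
    have := integrable_mul_of_memL2 (hyw2 i) ((hyw2 j).const_mul (P i j))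
    exact this
  -- value of the integral of each product
  have hprod : ∀ (i j : Fin d),
      ∫ ω, (y i + w ω i) * (P i j * (y j + w ω j)) ∂ℙ
        = P i j * (y i * y j + S i j) := by
    intro i j
    have hint : ∀ ω, (y i + w ω i) * (P i j * (y j + w ω j))
        = P i j * (y i * y j) + P i j * (y i * w ω j)
          + P i j * (w ω i * y j) + P i j * (w ω i * w ω j) := by
      intro ω; ring
    simp_rw [hint]
    have i1 : Integrable (fun ω => P i j * (y i * y j)) ℙ := integrable_const _
    have i2 : Integrable (fun ω => P i j * (y i * w ω j)) ℙ :=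
      (((hw2 j).integrable one_le_two).const_mul (y i)).const_mul (P i j)
    have i3 : Integrable (fun ω => P i j * (w ω i * y j)) ℙ :=
      (((hw2 i).integrable one_le_two).mul_const (y j)).const_mul (P i j)
    have i4 : Integrable (fun ω => P i j * (w ω i * w ω j)) ℙ :=
      (integrable_mul_of_memL2 (hw2 i) (hw2 j)).const_mul (P i j)
    have e1 : ∫ ω, (P i j * (y i * y j) + P i j * (y i * w ω j)
          + P i j * (w ω i * y j) + P i j * (w ω i * w ω j)) ∂ℙ
        = ((∫ ω, (P i j * (y i * y j)) ∂ℙ) + (∫ ω, (P i j * (y i * w ω j)) ∂ℙ)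
            + (∫ ω, (P i j * (w ω i * y j)) ∂ℙ)) + ∫ ω, (P i j * (w ω i * w ω j)) ∂ℙ := by
      have t1 := integral_add ((i1.add i2).add i3) i4
      have t2 := integral_add (i1.add i2) i3
      have t3 := integral_add i1 i2
      simp only [Pi.add_apply] at t1 t2 t3
      rw [t1, t2, t3]
    rw [e1]
    have c1 : ∫ (_ : Ω), (P i j * (y i * y j)) ∂ℙ = P i j * (y i * y j) := by simp
    have c2 : ∫ ω, (P i j * (y i * w ω j)) ∂ℙ = 0 := by
      simp_rw [integral_const_mul, hw0, mul_zero]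
    have c3 : ∫ ω, (P i j * (w ω i * y j)) ∂ℙ = 0 := by
      simp_rw [integral_const_mul, integral_mul_const, hw0, zero_mul, mul_zero]
    have c4 : ∫ ω, (P i j * (w ω i * w ω j)) ∂ℙ = P i j * S i j := by
      rw [integral_const_mul, hS]; rfl
    rw [c1, c2, c3, c4]; ring
  -- expand V at y + w ω
  have hVexp : ∀ ω, V (y + w ω)
      = 1 + (1/2) * ∑ p : Fin d × Fin d, (y p.1 + w ω p.1) * (P p.1 p.2 * (y p.2 + w ω p.2)) := by
    intro ω
    rw [hV]
    congr 2
    rw [Fintype.sum_prod_type]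
    simp [dotProduct, mulVec, Finset.mul_sum, Pi.add_apply]
  -- compute the expectation
  have hbig : Integrable (fun ω => ∑ p : Fin d × Fin d,
      (y p.1 + w ω p.1) * (P p.1 p.2 * (y p.2 + w ω p.2))) ℙ :=
    integrable_finset_sum _ (fun p _ => hterm p.1 p.2)
  have hint : ∫ ω, V (y + w ω) ∂ℙ
      = 1 + (1/2) * ∑ p : Fin d × Fin d, P p.1 p.2 * (y p.1 * y p.2 + S p.1 p.2) := by
    simp_rw [hVexp]
    have e1 : ∫ ω, (1 + 1/2 * ∑ p : Fin d × Fin d,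
          (y p.1 + w ω p.1) * (P p.1 p.2 * (y p.2 + w ω p.2))) ∂ℙ
        = (∫ (_ : Ω), (1:ℝ) ∂ℙ) + ∫ ω, (1/2 * ∑ p : Fin d × Fin d,
          (y p.1 + w ω p.1) * (P p.1 p.2 * (y p.2 + w ω p.2))) ∂ℙ :=
      integral_add (integrable_const 1) (hbig.const_mul _)
    rw [e1, integral_const_mul, integral_finset_sum _ (fun p _ => hterm p.1 p.2)]
    simp only [hprod]
    simp
  -- identify the sum
  have hsum : ∑ p : Fin d × Fin d, P p.1 p.2 * (y p.1 * y p.2 + S p.1 p.2)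
      = y ⬝ᵥ (P *ᵥ y) + t₀ := by
    simp_rw [mul_add, Finset.sum_add_distrib]
    congr 1
    · rw [Fintype.sum_prod_type]
      simp [dotProduct, mulVec, Finset.mul_sum]
      congr 1; ext i; congr 1; ext j; ring
    · rw [ht₀, Matrix.trace]
      simp only [Matrix.diag_apply, Matrix.mul_apply]
      rw [Fintype.sum_prod_type]
      congr 1; ext i; congr 1; ext j
      have hsym : S j i = S i j := by rw [hS]; simp [mul_comm]
      rw [hsym]
  -- bound y ⬝ P y ≤ R
  have hyPy : y ⬝ᵥ (P *ᵥ y) ≤ R := by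
    have h1 := hneg x
    rw [Matrix.add_mulVec, Matrix.sub_mulVec, dotProduct_add, dotProduct_sub] at h1
    have hM0 : 0 ≤ x ⬝ᵥ (M *ᵥ x) := by
      have := hM.posSemidef.dotProduct_mulVec_nonneg x
      simpa using this
    have := hft x
    linarith
  rw [hint, hsum]
  linarith
end
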